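/- For 1 ≤ i ≤ n−1, let A_i be the subalgebra of ℂ[G≀S_n] generated by the group elements of the subgroup Gⁿ (embedded with identity permutation), the Coxeter transposition s_i = (i,i+1), and the Young–Jucys–Murphy elements X_i and X_{i+1}. Then A_i is a semisimple algebra, and on any finite-dimensional A_i-module the actions of X_i and X_{i+1} are simultaneously diagonalizable. -/

import Mathlib

/-- The action of `Equiv.Perm (Fin n)` on `Fin n → G` by permuting coordinates. -/
def wreathHom (G : Type*) [Group G] (n : ℕ) : Equiv.Perm (Fin n) →* MulAut (Fin n → G) where
  toFun π := MulEquiv.arrowCongr π (MulEquiv.refl G)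
  map_one' := by ext f i; rfl
  map_mul' := by intro π σ; ext f i; rfl

/-- The wreath product `G ≀ Sₙ`. -/
abbrev WreathProduct (G : Type*) [Group G] (n : ℕ) :=
  SemidirectProduct (Fin n → G) (Equiv.Perm (Fin n)) (wreathHom G n)

/-- `g^{(i)}` : the element of `G ≀ Sₙ` with `g` in the `i`-th coordinate. -/
def gAt {G : Type*} [Group G] {n : ℕ} (i : Fin n) (g : G) : WreathProduct G n :=
  SemidirectProduct.inl (Pi.mulSingle i g)

/-- A permutation viewed inside `G ≀ Sₙ`. -/
def pIn {G : Type*} [Group G] {n : ℕ} (π : Equiv.Perm (Fin n)) : WreathProduct G n :=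
  SemidirectProduct.inr π

/-- The Young–Jucys–Murphy element with 0-based index: for `i : Fin n`, `YJM G n i` is the
element `X_{i+1}` (1-based), namely `X_{i+1} = Σ_{k<i} Σ_{g∈G} (g⁻¹)^{(k)} g^{(i)} (k,i)`. -/
noncomputable def YJM (G : Type*) [Group G] [Fintype G] (n : ℕ) (i : Fin n) :
    MonoidAlgebra ℂ (WreathProduct G n) :=
  ∑ k ∈ Finset.univ.filter (fun k : Fin n => k < i), ∑ g : G,
    MonoidAlgebra.of ℂ (WreathProduct G n)
      (gAt k g⁻¹ * gAt i g * pIn (Equiv.swap k i))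

/-- Generating set of the algebra `A_i`: the group elements of `Gⁿ` (with identity
permutation), the Coxeter transposition `s = (a, b)` with `b = a+1`, and the YJM elements
`X_a, X_b`. -/
noncomputable def genSetA (G : Type*) [Group G] [Fintype G] (n : ℕ) (a b : Fin n) :
    Set (MonoidAlgebra ℂ (WreathProduct G n)) :=
  (Set.range fun f : Fin n → G =>
      MonoidAlgebra.of ℂ (WreathProduct G n) (SemidirectProduct.inl f)) ∪
    {MonoidAlgebra.of ℂ (WreathProduct G n) (pIn (Equiv.swap a b)), YJM G n a, YJM G n b}

section Aux
variable {G : Type} [Group G] [Fintype G] {n : ℕ}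

instance : Fintype (WreathProduct G n) :=
  Fintype.ofEquiv ((Fin n → G) × Equiv.Perm (Fin n))
    { toFun := fun p => ⟨p.1, p.2⟩
      invFun := fun w => (w.left, w.right)
      left_inv := fun p => rfl
      right_inv := fun w => rfl }

@[simp] lemma wreathHom_apply (π : Equiv.Perm (Fin n)) (f : Fin n → G) (j : Fin n) :
    wreathHom G n π f j = f (π⁻¹ j) := rfl

/-- The basic transposition-type element of the wreath product. -/
def tauW (k i : Fin n) (g : G) : WreathProduct G n :=
  gAt k g⁻¹ * gAt i g * pIn (Equiv.swap k i)

lemma tauW_eq_mk (k i : Fin n) (g : G) (hki : k ≠ i) :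
    tauW k i g = ⟨fun j => if j = k then g⁻¹ else if j = i then g else 1, Equiv.swap k i⟩ := by
  unfold tauW gAt pIn
  ext j
  · simp only [SemidirectProduct.mul_left, SemidirectProduct.left_inl,
      SemidirectProduct.right_inl, SemidirectProduct.left_inr, map_one,
      SemidirectProduct.mul_right, SemidirectProduct.right_inr]
    simp only [MulAut.one_apply, Pi.mul_apply, Pi.one_apply, mul_one]
    by_cases hk : j = k
    · subst hk
      simp [Pi.mulSingle_apply, hki, Ne.symm hki]
    · by_cases hi : j = i
      · subst hi
        simp [Pi.mulSingle_apply, hk, Ne.symm hki]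
      · simp [Pi.mulSingle_apply, hk, hi]
  · simp [SemidirectProduct.mul_right]

lemma inl_mul_tauW (f : Fin n → G) (k i : Fin n) (hki : k ≠ i) (g : G) :
    SemidirectProduct.inl f * tauW k i g
      = tauW k i (f i * g * (f k)⁻¹) * SemidirectProduct.inl f := by
  rw [tauW_eq_mk k i g hki, tauW_eq_mk k i _ hki]
  ext j
  · simp only [SemidirectProduct.mul_left, SemidirectProduct.left_inl,
      SemidirectProduct.right_inl, map_one, MulAut.one_apply, Pi.mul_apply,
      wreathHom_apply]
    rw [Equiv.Perm.inv_def, Equiv.symm_swap]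
    by_cases hk : j = k
    · subst hk; simp [Equiv.swap_apply_left, hki, Ne.symm hki]; group
    · by_cases hi : j = i
      · subst hi; simp [Equiv.swap_apply_right, hk, Ne.symm hki]
      · simp [Equiv.swap_apply_of_ne_of_ne hk hi, hk, hi]
  · simp [SemidirectProduct.mul_right]

lemma pIn_mul_tauW (π : Equiv.Perm (Fin n)) (k i : Fin n) (hki : k ≠ i)
    (hπi : π i = i) (g : G) :
    pIn π * tauW k i g = tauW (π k) i g * pIn π := by
  have hπki : π k ≠ i := fun h => hki (π.injective (h.trans hπi.symm))
  have hπinvi : π⁻¹ i = i := π.injective (by rw [Equiv.Perm.inv_def, Equiv.apply_symm_apply, hπi])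
  have hperm : π * Equiv.swap k i = Equiv.swap (π k) i * π := by
    rw [Equiv.mul_swap_eq_swap_mul, hπi]
  rw [tauW_eq_mk k i g hki, tauW_eq_mk (π k) i g hπki]
  unfold pIn
  ext j
  · simp only [SemidirectProduct.mul_left, SemidirectProduct.left_inr,
      SemidirectProduct.right_inr, one_mul, wreathHom_apply, SemidirectProduct.left_inl,
      SemidirectProduct.right_inl, map_one, MulAut.one_apply, Pi.mul_apply,
      Pi.one_apply, mul_one]
    by_cases hk : j = π k
    · rw [hk]
      simp [Equiv.Perm.inv_def, hπki]
    · by_cases hi : j = i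
      · rw [hi]
        simp [hπinvi, Ne.symm hki, fun h : (i:Fin n) = π k => (hi ▸ hk) h]
      · have h1 : π⁻¹ j ≠ k := fun h => hk (by rw [← h, Equiv.Perm.inv_def, Equiv.apply_symm_apply])
        have h2 : π⁻¹ j ≠ i := fun h => hi (by rw [← hπi, ← h, Equiv.Perm.inv_def, Equiv.apply_symm_apply])
        simp only [Equiv.Perm.inv_def] at h1 h2
        simp [h1, h2, hk, hi]
  · simp only [SemidirectProduct.mul_right, SemidirectProduct.right_inr,
      SemidirectProduct.right_inl, one_mul, mul_one]
    rw [hperm]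

lemma tauW_mul_self (k i : Fin n) (hki : k ≠ i) (g : G) :
    tauW k i g * tauW k i g = 1 := by
  rw [tauW_eq_mk k i g hki]
  ext j
  · simp only [SemidirectProduct.mul_left, wreathHom_apply, Pi.mul_apply,
      SemidirectProduct.one_left, Pi.one_apply]
    rw [Equiv.Perm.inv_def, Equiv.symm_swap]
    by_cases hk : j = k
    · subst hk; simp [Equiv.swap_apply_left, hki, Ne.symm hki]
    · by_cases hi : j = i
      · subst hi; simp [Equiv.swap_apply_right, hk, Ne.symm hki]
      · simp [Equiv.swap_apply_of_ne_of_ne hk hi, hk, hi]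
  · simp [SemidirectProduct.mul_right]

lemma tauW_inv (k i : Fin n) (hki : k ≠ i) (g : G) : (tauW k i g)⁻¹ = tauW k i g :=
  inv_eq_of_mul_eq_one_right (tauW_mul_self k i hki g)

end Aux

section AlgAux
variable {G : Type} [Group G] [Fintype G] {n : ℕ}

local notation "Γ" => WreathProduct G n
local notation "M" => MonoidAlgebra ℂ (WreathProduct G n)
local notation "oW" => MonoidAlgebra.of ℂ (WreathProduct G n)

lemma YJM_def (i : Fin n) :
    YJM G n i = ∑ k ∈ Finset.univ.filter (fun k : Fin n => k < i), ∑ g : G,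
      oW (tauW k i g) := rfl

lemma tauW_split (k i : Fin n) (g : G) :
    tauW k i g = SemidirectProduct.inl (Pi.mulSingle k g⁻¹ * Pi.mulSingle i g)
      * pIn (Equiv.swap k i) := by
  rw [tauW, gAt, gAt, ← map_mul]

lemma of_inl_comm_YJM (f : Fin n → G) (i : Fin n) :
    oW (SemidirectProduct.inl f) * YJM G n i = YJM G n i * oW (SemidirectProduct.inl f) := by
  rw [YJM_def, Finset.mul_sum, Finset.sum_mul]
  refine Finset.sum_congr rfl fun k hk => ?_
  have hki : k ≠ i := ne_of_lt (Finset.mem_filter.mp hk).2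
  rw [Finset.mul_sum, Finset.sum_mul]
  refine Fintype.sum_equiv ((Equiv.mulLeft (f i)).trans (Equiv.mulRight (f k)⁻¹)) _ _
    (fun g => ?_)
  rw [← map_mul, inl_mul_tauW f k i hki g, map_mul]
  rfl

lemma of_pIn_comm_YJM (π : Equiv.Perm (Fin n)) (i : Fin n)
    (hπ : ∀ j : Fin n, ¬ j < i → π j = j) :
    oW (pIn π) * YJM G n i = YJM G n i * oW (pIn π) := by
  have hπi : π i = i := hπ i (lt_irrefl i)
  rw [YJM_def, Finset.mul_sum, Finset.sum_mul]
  refine Finset.sum_equiv (π : Equiv.Perm (Fin n)) (fun k => ?_) (fun k hk => ?_)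
  · simp only [Finset.mem_filter, Finset.mem_univ, true_and]
    constructor
    · intro h
      by_contra hc
      have h1 : π (π k) = π k := hπ _ hc
      have h2 : π k = k := π.injective h1
      rw [h2] at hc; exact hc h
    · intro h
      by_contra hc
      have h2 : π k = k := hπ k hc
      rw [h2] at h; exact hc h
  · have hki : k ≠ i := ne_of_lt (Finset.mem_filter.mp hk).2
    rw [Finset.mul_sum, Finset.sum_mul]
    refine Finset.sum_congr rfl fun g _ => ?_
    rw [← map_mul, pIn_mul_tauW π k i hki hπi g, map_mul]

lemma of_tauW_comm_YJM (k a b : Fin n) (hka : k < a) (hab : a < b) (g : G) :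
    oW (tauW k a g) * YJM G n b = YJM G n b * oW (tauW k a g) := by
  have hswap : ∀ j : Fin n, ¬ j < b → Equiv.swap k a j = j := by
    intro j hj
    have h1 : j ≠ k := fun h => hj (h ▸ (hka.trans hab))
    have h2 : j ≠ a := fun h => hj (h ▸ hab)
    exact Equiv.swap_apply_of_ne_of_ne h1 h2
  rw [tauW_split, map_mul, mul_assoc, of_pIn_comm_YJM _ _ hswap, ← mul_assoc,
    of_inl_comm_YJM, mul_assoc]

lemma YJM_comm (a b : Fin n) (hab : a < b) :
    YJM G n a * YJM G n b = YJM G n b * YJM G n a := by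
  rw [YJM_def a, Finset.sum_mul, Finset.mul_sum]
  refine Finset.sum_congr rfl fun k hk => ?_
  have hka : k < a := (Finset.mem_filter.mp hk).2
  rw [Finset.sum_mul, Finset.mul_sum]
  exact Finset.sum_congr rfl fun g _ => of_tauW_comm_YJM k a b hka hab g

end AlgAux

section InnerAux
open scoped ComplexInnerProductSpace
variable {G : Type} [Group G] [Fintype G] {n : ℕ}

/-- The group algebra as a Euclidean space. -/
noncomputable def eqE (G : Type) [Group G] [Fintype G] (n : ℕ) :
    MonoidAlgebra ℂ (WreathProduct G n) ≃ₗ[ℂ] EuclideanSpace ℂ (WreathProduct G n) :=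
  (MonoidAlgebra.coeffLinearEquiv ℂ).trans <| (Finsupp.linearEquivFunOnFinite ℂ ℂ (WreathProduct G n)).trans
    (WithLp.linearEquiv 2 ℂ (WreathProduct G n → ℂ)).symm

lemma eqE_apply (x : MonoidAlgebra ℂ (WreathProduct G n)) (h : WreathProduct G n) :
    eqE G n x h = x.coeff h := rfl

lemma inner_eqE (x y : MonoidAlgebra ℂ (WreathProduct G n)) :
    ⟪eqE G n x, eqE G n y⟫ = ∑ h : WreathProduct G n, (starRingEnd ℂ) (x.coeff h) * y.coeff h := by
  simp [PiLp.inner_apply, RCLike.inner_apply, eqE_apply, mul_comm]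

lemma adj_of (t : WreathProduct G n) (x y : MonoidAlgebra ℂ (WreathProduct G n)) :
    ⟪eqE G n (MonoidAlgebra.of ℂ (WreathProduct G n) t * x), eqE G n y⟫
      = ⟪eqE G n x, eqE G n (MonoidAlgebra.of ℂ (WreathProduct G n) t⁻¹ * y)⟫ := by
  rw [inner_eqE, inner_eqE]
  refine Fintype.sum_equiv (Equiv.mulLeft t⁻¹) _ _ fun h => ?_
  simp [MonoidAlgebra.of_apply, MonoidAlgebra.single_mul_apply, inv_mul_cancel_left]

lemma adj_YJM (i : Fin n) (x y : MonoidAlgebra ℂ (WreathProduct G n)) :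
    ⟪eqE G n (YJM G n i * x), eqE G n y⟫
      = ⟪eqE G n x, eqE G n (YJM G n i * y)⟫ := by
  rw [YJM_def]
  simp only [Finset.sum_mul, map_sum, sum_inner, inner_sum]
  refine Finset.sum_congr rfl fun k hk => Finset.sum_congr rfl fun g _ => ?_
  have hki : k ≠ i := ne_of_lt (Finset.mem_filter.mp hk).2
  rw [adj_of, tauW_inv k i hki g]

end InnerAux

section SS
open scoped ComplexInnerProductSpace
variable {G : Type} [Group G] [Fintype G] {n : ℕ} {a b : Fin n}

lemma exists_adjoint {x : MonoidAlgebra ℂ (WreathProduct G n)}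
    (hx : x ∈ Algebra.adjoin ℂ (genSetA G n a b)) :
    ∃ y ∈ Algebra.adjoin ℂ (genSetA G n a b), ∀ u v : MonoidAlgebra ℂ (WreathProduct G n),
      ⟪eqE G n (x * u), eqE G n v⟫ = ⟪eqE G n u, eqE G n (y * v)⟫ := by
  induction hx using Algebra.adjoin_induction with
  | mem z hz =>
    rcases hz with ⟨f, rfl⟩ | hz
    · refine ⟨MonoidAlgebra.of ℂ (WreathProduct G n) (SemidirectProduct.inl f⁻¹),
        Algebra.subset_adjoin (Or.inl ⟨f⁻¹, rfl⟩), fun u v => ?_⟩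
      have h1 : (SemidirectProduct.inl f : WreathProduct G n)⁻¹
          = SemidirectProduct.inl f⁻¹ := by
        rw [← map_inv]
      rw [← h1]
      exact adj_of _ u v
    · simp only [Set.mem_insert_iff, Set.mem_singleton_iff] at hz
      rcases hz with rfl | rfl | rfl
      · refine ⟨MonoidAlgebra.of ℂ (WreathProduct G n) (pIn (Equiv.swap a b)),
          Algebra.subset_adjoin (Or.inr (by simp)), fun u v => ?_⟩
        have h1 : (pIn (Equiv.swap a b) : WreathProduct G n)⁻¹ = pIn (Equiv.swap a b) := by
          unfold pIn; rw [← map_inv, Equiv.swap_inv]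
        nth_rewrite 2 [← h1]
        exact adj_of _ u v
      · exact ⟨YJM G n a, Algebra.subset_adjoin (Or.inr (by simp)), adj_YJM a⟩
      · exact ⟨YJM G n b, Algebra.subset_adjoin (Or.inr (by simp)), adj_YJM b⟩
  | algebraMap c =>
    refine ⟨algebraMap ℂ _ ((starRingEnd ℂ) c), Subalgebra.algebraMap_mem _ _, fun u v => ?_⟩
    rw [← Algebra.smul_def, ← Algebra.smul_def, map_smul, map_smul,
      inner_smul_left, inner_smul_right]
  | add x y hx hy ihx ihy =>
    obtain ⟨y1, hy1, h1⟩ := ihx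
    obtain ⟨y2, hy2, h2⟩ := ihy
    refine ⟨y1 + y2, add_mem hy1 hy2, fun u v => ?_⟩
    rw [add_mul, add_mul, map_add, map_add, inner_add_left, inner_add_right, h1 u v, h2 u v]
  | mul x y hx hy ihx ihy =>
    obtain ⟨y1, hy1, h1⟩ := ihx
    obtain ⟨y2, hy2, h2⟩ := ihy
    refine ⟨y2 * y1, mul_mem hy2 hy1, fun u v => ?_⟩
    rw [mul_assoc, h1 (y * u) v, h2 u (y1 * v), mul_assoc]

set_option maxHeartbeats 1000000 in
set_option synthInstance.maxHeartbeats 1000000 in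
theorem Ai_isSemisimple (G : Type) [Group G] [Fintype G] (n : ℕ) (a b : Fin n) :
    IsSemisimpleRing (Algebra.adjoin ℂ (genSetA G n a b)) := by
  set A := Algebra.adjoin ℂ (genSetA G n a b) with hA
  have hM : IsSemisimpleModule A (MonoidAlgebra ℂ (WreathProduct G n)) := by
    refine { toComplementedLattice := ⟨fun W => ?_⟩ }
    set K : Submodule ℂ (EuclideanSpace ℂ (WreathProduct G n)) :=
      (W.restrictScalars ℂ).map (eqE G n).toLinearMap with hK
    have memK : ∀ w : MonoidAlgebra ℂ (WreathProduct G n), w ∈ W → eqE G n w ∈ K :=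
      fun w hw => Submodule.mem_map.mpr ⟨w, hw, rfl⟩
    refine ⟨{ carrier := {v | eqE G n v ∈ Kᗮ}
              zero_mem' := by simp
              add_mem' := fun {x y} hx hy => by
                simp only [Set.mem_setOf_eq, map_add]
                exact add_mem hx hy
              smul_mem' := fun c v hv => by
                simp only [Set.mem_setOf_eq]
                rw [Submodule.mem_orthogonal]
                rintro u hu
                obtain ⟨w, hwW, rfl⟩ := Submodule.mem_map.mp hu
                obtain ⟨yc, hycA, hadj⟩ := exists_adjoint c.2
                have hcv : (c • v : MonoidAlgebra ℂ (WreathProduct G n)) = (c : MonoidAlgebra ℂ (WreathProduct G n)) * v := rfl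
                have hyw : yc * w ∈ W := W.smul_mem ⟨yc, hycA⟩ hwW
                calc ⟪eqE G n w, eqE G n (c • v)⟫
                    = (starRingEnd ℂ) ⟪eqE G n (c • v), eqE G n w⟫ := (inner_conj_symm _ _).symm
                  _ = (starRingEnd ℂ) ⟪eqE G n v, eqE G n (yc * w)⟫ := by rw [hcv, hadj v w]
                  _ = ⟪eqE G n (yc * w), eqE G n v⟫ := inner_conj_symm _ _
                  _ = 0 := (Submodule.mem_orthogonal _ _).mp hv _ (memK _ hyw) },
      ?_, ?_⟩
    · -- disjoint
      rw [disjoint_iff, eq_bot_iff]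
      rintro x ⟨hx1, hx2⟩
      have h0 : ⟪eqE G n x, eqE G n x⟫ = 0 :=
        (Submodule.mem_orthogonal _ _).mp hx2 _ (memK _ hx1)
      have : eqE G n x = 0 := inner_self_eq_zero.mp h0
      have hx0 : x = 0 := by
        apply (eqE G n).injective
        simp [this]
      simp [hx0]
    · -- codisjoint
      rw [codisjoint_iff, eq_top_iff]
      rintro x -
      have hK2 : K ⊔ Kᗮ = ⊤ := Submodule.sup_orthogonal_of_hasOrthogonalProjection
      have hx : eqE G n x ∈ K ⊔ Kᗮ := by rw [hK2]; trivial
      rw [Submodule.mem_sup] at hx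
      obtain ⟨u, hu, z, hz, huz⟩ := hx
      obtain ⟨w, hwW, hw⟩ := Submodule.mem_map.mp hu
      simp only [LinearEquiv.coe_coe] at hw
      refine Submodule.mem_sup.mpr ⟨w, hwW, x - w, ?_, by abel⟩
      show eqE G n (x - w) ∈ Kᗮ
      rw [map_sub, hw, ← huz]
      simpa using hz
  let AW : Submodule A (MonoidAlgebra ℂ (WreathProduct G n)) :=
    { carrier := (A : Set (MonoidAlgebra ℂ (WreathProduct G n)))
      zero_mem' := zero_mem A
      add_mem' := fun hx hy => add_mem hx hy
      smul_mem' := fun c x hx => by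
        show (c : MonoidAlgebra ℂ (WreathProduct G n)) * x ∈ A
        exact mul_mem c.2 hx }
  haveI hAW : IsSemisimpleModule A AW := inferInstance
  exact IsSemisimpleModule.congr (R := A) (M := AW) (N := A)
    ({ toFun := fun x => (⟨(x : MonoidAlgebra ℂ (WreathProduct G n)), x.2⟩ : AW)
       invFun := fun x => ⟨x.1, x.2⟩
       left_inv := fun x => rfl
       right_inv := fun x => rfl
       map_add' := fun x y => rfl
       map_smul' := fun c x => rfl } : A ≃ₗ[A] AW)

end SS

section Diag
open scoped ComplexInnerProductSpace
open Polynomial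
variable {G : Type} [Group G] [Fintype G] {n : ℕ}

lemma exists_squarefree_aeval_YJM (i : Fin n) :
    ∃ p : ℂ[X], Squarefree p ∧ aeval (YJM G n i) p = 0 := by
  set M := MonoidAlgebra ℂ (WreathProduct G n) with hM
  set Sa : Module.End ℂ (EuclideanSpace ℂ (WreathProduct G n)) :=
    (eqE G n).conjAlgEquiv ℂ ((Algebra.lmul ℂ M) (YJM G n i)) with hSa
  have happly : ∀ w, Sa w = eqE G n (YJM G n i * (eqE G n).symm w) := fun w => rfl
  have hSym : Sa.IsSymmetric := by
    intro u v
    rw [happly u, happly v]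
    nth_rewrite 1 [← (eqE G n).apply_symm_apply v]
    nth_rewrite 2 [← (eqE G n).apply_symm_apply u]
    exact adj_YJM i ((eqE G n).symm u) ((eqE G n).symm v)
  have hss : Sa.IsSemisimple :=
    Module.End.isFinitelySemisimple_iff_isSemisimple.mp hSym.isFinitelySemisimple
  refine ⟨minpoly ℂ Sa, hss.minpoly_squarefree, ?_⟩
  have h0 : aeval Sa (minpoly ℂ Sa) = 0 := minpoly.aeval ℂ Sa
  have h1 : aeval Sa (minpoly ℂ Sa)
      = (eqE G n).conjAlgEquiv ℂ ((Algebra.lmul ℂ M) (aeval (YJM G n i) (minpoly ℂ Sa))) := by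
    rw [hSa, ← Polynomial.aeval_algHom_apply, ← Polynomial.aeval_algHom_apply]
  rw [h1] at h0
  have h2 : (Algebra.lmul ℂ M) (aeval (YJM G n i) (minpoly ℂ Sa)) = 0 := by
    apply (((eqE G n).conjAlgEquiv ℂ).injective)
    rw [h0, map_zero]
  exact Algebra.lmul_injective (by rw [h2, map_zero])

end Diag

open Polynomial in
set_option maxHeartbeats 1000000 in
set_option synthInstance.maxHeartbeats 1000000 in
/-- The subalgebra `A_i` of `ℂ[G≀Sₙ]` generated by `Gⁿ`, the Coxeter
transposition `s_i` and the YJM elements `X_i, X_{i+1}` is semisimple, and on every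
finite-dimensional `A_i`-module the actions of `X_i` and `X_{i+1}` are simultaneously
diagonalizable. -/
theorem Ai_semisimple_and_simultaneously_diagonalizable (G : Type) [Group G] [Fintype G]
    (n : ℕ) (a b : Fin n) (hab : (a : ℕ) + 1 = (b : ℕ)) :
    IsSemisimpleRing (Algebra.adjoin ℂ (genSetA G n a b)) ∧
    (∀ (V : Type) [AddCommGroup V] [Module ℂ V]
        [Module (Algebra.adjoin ℂ (genSetA G n a b)) V]
        [IsScalarTower ℂ (Algebra.adjoin ℂ (genSetA G n a b)) V] [FiniteDimensional ℂ V],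
      ∃ (ι : Type) (_ : Fintype ι) (B : Module.Basis ι ℂ V), ∀ x : ι,
        (∃ c : ℂ, (⟨YJM G n a, Algebra.subset_adjoin (by simp [genSetA])⟩ :
            Algebra.adjoin ℂ (genSetA G n a b)) • B x = c • B x) ∧
        (∃ c : ℂ, (⟨YJM G n b, Algebra.subset_adjoin (by simp [genSetA])⟩ :
            Algebra.adjoin ℂ (genSetA G n a b)) • B x = c • B x)) := by 
  refine ⟨Ai_isSemisimple G n a b, ?_⟩
  intro V _ _ _ _ _
  have smulcomm : ∀ (c : ℂ) (x : Algebra.adjoin ℂ (genSetA G n a b)) (v : V),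
      x • c • v = c • x • v := by
    intro c x v
    rw [← algebraMap_smul (Algebra.adjoin ℂ (genSetA G n a b)) c v, ← mul_smul,
      ← Algebra.commutes, mul_smul, algebraMap_smul]
  let ρ : Algebra.adjoin ℂ (genSetA G n a b) →ₐ[ℂ] Module.End ℂ V :=
    { toFun := fun x =>
        { toFun := fun v => x • v
          map_add' := fun v w => smul_add x v w
          map_smul' := fun c v => smulcomm c x v }
      map_one' := LinearMap.ext fun v => one_smul _ v
      map_mul' := fun x y => LinearMap.ext fun v => mul_smul x y v
      map_zero' := LinearMap.ext fun v => zero_smul _ v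
      map_add' := fun x y => LinearMap.ext fun v => add_smul x y v
      commutes' := fun c => LinearMap.ext fun v => by
        show (algebraMap ℂ (Algebra.adjoin ℂ (genSetA G n a b)) c) • v = _
        rw [algebraMap_smul, Module.algebraMap_end_apply] }
  have hamem : YJM G n a ∈ Algebra.adjoin ℂ (genSetA G n a b) :=
    Algebra.subset_adjoin (by simp [genSetA])
  have hbmem : YJM G n b ∈ Algebra.adjoin ℂ (genSetA G n a b) :=
    Algebra.subset_adjoin (by simp [genSetA])
  set Xa : Algebra.adjoin ℂ (genSetA G n a b) := ⟨YJM G n a, hamem⟩ with hXa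
  set Xb : Algebra.adjoin ℂ (genSetA G n a b) := ⟨YJM G n b, hbmem⟩ with hXb
  set Ta := ρ Xa with hTa
  set Tb := ρ Xb with hTb
  have hab' : a < b := by rw [Fin.lt_def]; omega
  have hcomm : Commute Ta Tb := by
    have h : Xa * Xb = Xb * Xa := Subtype.ext (YJM_comm a b hab')
    show Ta * Tb = Tb * Ta
    rw [hTa, hTb, ← map_mul, h, map_mul]
  obtain ⟨pa, hpa, hpa0⟩ := exists_squarefree_aeval_YJM (G := G) (n := n) a
  obtain ⟨pb, hpb, hpb0⟩ := exists_squarefree_aeval_YJM (G := G) (n := n) b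
  have haevalA : ∀ (p : ℂ[X]) (x : Algebra.adjoin ℂ (genSetA G n a b)),
      aeval (x : MonoidAlgebra ℂ (WreathProduct G n)) p = 0 → aeval x p = 0 := by
    intro p x h
    apply Subtype.val_injective
    have h2 := Polynomial.aeval_algHom_apply (Subalgebra.val _) x p
    simp only [Subalgebra.coe_val] at h2
    rw [← h2, h]
    rfl
  have hTa0 : aeval Ta pa = 0 := by
    rw [hTa, Polynomial.aeval_algHom_apply, haevalA pa Xa hpa0, map_zero]
  have hTb0 : aeval Tb pb = 0 := by
    rw [hTb, Polynomial.aeval_algHom_apply, haevalA pb Xb hpb0, map_zero]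
  set T : Bool → Module.End ℂ V := fun j => bif j then Ta else Tb with hT
  have hTfs : ∀ j, (T j).IsFinitelySemisimple := by
    intro j
    cases j
    · exact (Module.End.isSemisimple_of_squarefree_aeval_eq_zero hpb hTb0).isFinitelySemisimple
    · exact (Module.End.isSemisimple_of_squarefree_aeval_eq_zero hpa hTa0).isFinitelySemisimple
  have hpair : Pairwise (Function.onFun Commute T) := by
    intro x y hxy
    cases x <;> cases y
    · exact absurd rfl hxy
    · exact hcomm.symm
    · exact hcomm
    · exact absurd rfl hxy
  have htop : ⨆ χ : Bool → ℂ, ⨅ j, (T j).eigenspace (χ j) = ⊤ := by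
    have h1 := Module.End.iSup_iInf_maxGenEigenspace_eq_top_of_iSup_maxGenEigenspace_eq_top_of_commute
      T hpair (fun j => Module.End.iSup_maxGenEigenspace_eq_top _)
    have heq : ∀ (j : Bool) (μ : ℂ), (T j).maxGenEigenspace μ = (T j).eigenspace μ :=
      fun j μ => (hTfs j).maxGenEigenspace_eq_eigenspace μ
    simp_rw [heq] at h1
    exact h1
  set s : Set V := ⋃ χ : Bool → ℂ, (((⨅ j, (T j).eigenspace (χ j)) : Submodule ℂ V) : Set V)
    with hs
  have hspan : Submodule.span ℂ s = ⊤ := by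
    rw [hs, Submodule.span_iUnion]
    simp_rw [Submodule.span_eq]
    exact htop
  obtain ⟨bs, hbs_sub, hbs_span, hbs_li⟩ := exists_linearIndependent ℂ s
  have hfin : bs.Finite := hbs_li.setFinite
  haveI : Fintype ↥bs := hfin.fintype
  have hbt : ⊤ ≤ Submodule.span ℂ (Set.range (fun x : bs => (x : V))) := by
    rw [Subtype.range_coe, hbs_span, hspan]
  let B : Module.Basis ↥bs ℂ V := Module.Basis.mk hbs_li hbt
  refine ⟨↥bs, inferInstance, B, fun x => ?_⟩
  have hmem : (↑x : V) ∈ s := hbs_sub x.2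
  rw [hs] at hmem
  obtain ⟨χ, hχ⟩ := Set.mem_iUnion.mp hmem
  have hx1 : (↑x : V) ∈ (⨅ j, (T j).eigenspace (χ j)) := hχ
  have hxa : Ta ↑x = χ true • (↑x : V) :=
    Module.End.mem_eigenspace_iff.mp ((Submodule.mem_iInf _).mp hx1 true)
  have hxb : Tb ↑x = χ false • (↑x : V) :=
    Module.End.mem_eigenspace_iff.mp ((Submodule.mem_iInf _).mp hx1 false)
  have hBx : (B x : V) = ↑x := Module.Basis.mk_apply hbs_li hbt x
  exact ⟨⟨χ true, by rw [hBx]; exact hxa⟩, ⟨χ false, by rw [hBx]; exact hxb⟩⟩
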